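/- Let ξ_B, ξ_D, θ, σ_B², σ_D², φ_CB, φ_CD, p_C > 0. Set K = ξ_B/(1+ξ_B) and M = √(φ_CD·(θ + σ_B²)·K/(φ_CB·ξ_D·σ_D²)). Define h(α) = ξ_B·(1+ξ_B)·(θ + σ_B²)/(φ_CB·p_C·((1+ξ_B)·α − ξ_B)²) and l(α) = −ξ_D·σ_D²/(φ_CD·p_C·(1 − α)²). Then α* = (K + M)/(1 + M) satisfies K < α* < 1, and α* is the unique solution in (K, 1) of the equation h(α) + l(α) = 0. -/
import Mathlib


open Set Real

/-- the optimal power splitting factor `α* = (K + M)/(1 + M)` lies in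
`(K, 1)` and is the unique solution of `h(α) + l(α) = 0` there. -/
theorem optimal_power_splitting_factor
    (ξB ξD θ σB2 σD2 φCB φCD pC : ℝ)
    (hξB : 0 < ξB) (hξD : 0 < ξD) (hθ : 0 < θ) (hσB : 0 < σB2) (hσD : 0 < σD2)
    (hφCB : 0 < φCB) (hφCD : 0 < φCD) (hpC : 0 < pC) :
    let K : ℝ := ξB / (1 + ξB)
    let M : ℝ := Real.sqrt (φCD * (θ + σB2) * K / (φCB * ξD * σD2))
    let h : ℝ → ℝ := fun α =>
      ξB * (1 + ξB) * (θ + σB2) / (φCB * pC * ((1 + ξB) * α - ξB) ^ 2)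
    let l : ℝ → ℝ := fun α => -(ξD * σD2) / (φCD * pC * (1 - α) ^ 2)
    let αstar : ℝ := (K + M) / (1 + M)
    K < αstar ∧ αstar < 1 ∧ h αstar + l αstar = 0 ∧
      ∀ α ∈ Ioo K 1, h α + l α = 0 → α = αstar := by
  intro K M h l αstar
  have h1ξ : (0:ℝ) < 1 + ξB := by linarith
  have hKpos : 0 < K := div_pos hξB h1ξ
  have hK1 : K < 1 := (div_lt_one h1ξ).mpr (by linarith)
  have harg : 0 < φCD * (θ + σB2) * K / (φCB * ξD * σD2) := by positivity
  have hM : 0 < M := Real.sqrt_pos.mpr harg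
  have hM2 : M ^ 2 = φCD * (θ + σB2) * K / (φCB * ξD * σD2) := Real.sq_sqrt harg.le
  have hM2' : M ^ 2 * (φCB * ξD * σD2) = φCD * (θ + σB2) * K := by
    rw [hM2]; field_simp
  have h1M : (0:ℝ) < 1 + M := by linarith
  have hKξ : K * (1 + ξB) = ξB := div_mul_cancel₀ _ h1ξ.ne'
  -- key equivalence: for α ∈ (K,1), h α + l α = 0 ↔ M * (1 - α) = α - K
  have key : ∀ α : ℝ, K < α → α < 1 → (h α + l α = 0 ↔ M * (1 - α) = α - K) := by
    intro α hKα hα1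
    have hd1 : (1 + ξB) * α - ξB = (1 + ξB) * (α - K) := by
      rw [mul_sub]; rw [mul_comm (1 + ξB) K, hKξ]
    have hαK : 0 < α - K := by linarith
    have h1α : (0:ℝ) < 1 - α := by linarith
    have hd1pos : 0 < (1 + ξB) * α - ξB := by rw [hd1]; positivity
    simp only [h, l]
    rw [div_add_div _ _ (by positivity) (by positivity), div_eq_zero_iff]
    constructor
    · rintro (heq | heq)
      · have hexp : ξB * (1 + ξB) * (θ + σB2) * (φCD * pC * (1 - α) ^ 2)
            = ξD * σD2 * (φCB * pC * ((1 + ξB) * (α - K)) ^ 2) := by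
          rw [← hd1]; linarith
        have h2 : K * (θ + σB2) * (φCD * (1 - α) ^ 2)
            = ξD * σD2 * (φCB * (α - K) ^ 2) := by
          have hne : (1 + ξB) ^ 2 * pC ≠ 0 := by positivity
          apply mul_left_cancel₀ hne
          linear_combination hexp + ((1 + ξB) * pC * (θ + σB2) * φCD * (1 - α) ^ 2) * hKξ
        have hsq : (M * (1 - α)) ^ 2 = (α - K) ^ 2 := by
          have hne : φCB * ξD * σD2 ≠ 0 := by positivity
          apply mul_right_cancel₀ hne
          linear_combination (1 - α) ^ 2 * hM2' + h2
        have hprod : (M * (1 - α) - (α - K)) * (M * (1 - α) + (α - K)) = 0 := by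
          linear_combination hsq
        rcases mul_eq_zero.mp hprod with h0 | h0
        · linarith
        · exfalso; nlinarith [mul_pos hM h1α]
      · exact absurd heq (by positivity)
    · intro hcross
      left
      rw [hd1]
      have hsq : M ^ 2 * (1 - α) ^ 2 = (α - K) ^ 2 := by
        linear_combination (M * (1 - α) + (α - K)) * hcross
      linear_combination (-((1 + ξB) * pC * φCD * (θ + σB2) * (1 - α) ^ 2)) * hKξ
        + (-((1 + ξB) ^ 2 * pC * (1 - α) ^ 2)) * hM2'
        + ((1 + ξB) ^ 2 * pC * φCB * ξD * σD2) * hsq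
  have heqn : αstar * (1 + M) = K + M := div_mul_cancel₀ _ h1M.ne'
  have hKα : K < αstar := by
    rw [show αstar = (K + M) / (1 + M) from rfl, lt_div_iff₀ h1M]
    nlinarith [mul_pos hM (sub_pos.mpr hK1)]
  have hα1 : αstar < 1 := by
    rw [show αstar = (K + M) / (1 + M) from rfl, div_lt_one h1M]; linarith
  refine ⟨hKα, hα1, ?_, ?_⟩
  · rw [key αstar hKα hα1]
    linear_combination -heqn
  · intro α hα heq
    have hcross := (key α hα.1 hα.2).mp heq
    show α = (K + M) / (1 + M)
    rw [eq_div_iff h1M.ne']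
    linear_combination -hcross
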